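/- Let R_1 = [w_1,…,w_s] and R_2 = [w'_1,…,w'_t] be vertex-disjoint induced paths of a finite simple block graph, and let Q = [v_1,…,v_r] be an induced path with v_1 = w_1 and v_r = w'_t. Then there is a unique decomposition Q = Q_1 * γ * Q_2 where Q_1 is a subpath of R_1, Q_2 is a subpath of R_2, and γ ∩ R_1 and γ ∩ R_2 each consist of a single vertex. -/

import Mathlib

open SimpleGraph

/-- An induced path in a simple graph `G`: a walk which is a path and such that the
subgraph of `G` induced on its vertex set equals the path. -/
structure InducedPath {V : Type*} (G : SimpleGraph V) where
  first : V
  last : V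
  walk : G.Walk first last
  isPath : walk.IsPath
  induced : ∀ x ∈ walk.support, ∀ y ∈ walk.support, G.Adj x y → s(x, y) ∈ walk.edges

namespace InducedPath

variable {V : Type*} {G : SimpleGraph V}

/-- The vertex set of an induced path. -/
def vertexSet (P : InducedPath G) : Set V := {v | v ∈ P.walk.support}

/-- The edge set of an induced path. -/
def edgeSet (P : InducedPath G) : Set (Sym2 V) := {e | e ∈ P.walk.edges}

/-- The terminal vertices `∂P` of an induced path. -/
def boundary (P : InducedPath G) : Set V := {P.first, P.last}

/-- The internal vertices `P°` of an induced path. -/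
def interior (P : InducedPath G) : Set V := P.vertexSet \ P.boundary

end InducedPath

section FamilyDefs

variable {V : Type*} (G : SimpleGraph V) {ℓ : ℕ}

/-- `Q` contains `P` as a subgraph. -/
def PathContains (Q P : InducedPath G) : Prop :=
  P.vertexSet ⊆ Q.vertexSet ∧ P.edgeSet ⊆ Q.edgeSet

/-- The vertex set of `P_ind`, the induced subgraph on `⋃ i, V(P i)`. -/
def famVerts (P : Fin ℓ → InducedPath G) : Set V := ⋃ i, (P i).vertexSet

/-- The union of the edge sets of the paths `P i`. -/
def famEdges (P : Fin ℓ → InducedPath G) : Set (Sym2 V) := ⋃ i, (P i).edgeSet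

/-- The paths `P i` are pairwise vertex-disjoint. -/
def PairwiseVertexDisjoint (P : Fin ℓ → InducedPath G) : Prop :=
  ∀ i j : Fin ℓ, i ≠ j → Disjoint (P i).vertexSet (P j).vertexSet

/-- `φ` is an orientation of the induced path `P`, i.e. a surjection `{1,2} → ∂P`. -/
def IsOrientation (P : InducedPath G) (φ : Fin 2 → V) : Prop :=
  Set.range φ = P.boundary

/-- `Q` is an induced path of `P_ind` (equivalently, an induced path of `G` all of whose
vertices belong to `⋃ i, V(P i)`). -/
def IsPathOfInd (P : Fin ℓ → InducedPath G) (Q : InducedPath G) : Prop :=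
  Q.vertexSet ⊆ famVerts G P

/-- The data `(P, σ, φ)` is DOIP. -/
def IsDOIPData (P : Fin ℓ → InducedPath G) (σ : Equiv.Perm (Fin ℓ))
    (φ : Fin ℓ → Fin 2 → V) : Prop :=
  (∀ i, IsOrientation G (P i) (φ i)) ∧
    ∀ i j : Fin ℓ, σ i ≤ σ j → ∀ Q : InducedPath G, IsPathOfInd G P Q →
      ({Q.first, Q.last} : Set V) = {φ (σ i) 0, φ (σ j) 1} →
      ∃ k, PathContains G Q (P k)

/-- The family `P` is DOIP: there exist `σ` and orientations making it DOIP. -/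
def FamilyDOIP (P : Fin ℓ → InducedPath G) : Prop :=
  ∃ (σ : Equiv.Perm (Fin ℓ)) (φ : Fin ℓ → Fin 2 → V), IsDOIPData G P σ φ

/-- `Q` realizes an arc `(i,j)` of the directed multigraph `K_{P_ind}`. -/
def KArcWitness (P : Fin ℓ → InducedPath G) (φ : Fin ℓ → Fin 2 → V) (i j : Fin ℓ)
    (Q : InducedPath G) : Prop :=
  IsPathOfInd G P Q ∧ ({Q.first, Q.last} : Set V) = {φ i 0, φ j 1} ∧
    ∀ k, ¬ PathContains G Q (P k)

/-- `(i,j)` is an arc of `K_{P_ind}`. -/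
def KArc (P : Fin ℓ → InducedPath G) (φ : Fin ℓ → Fin 2 → V) (i j : Fin ℓ) : Prop :=
  ∃ Q : InducedPath G, KArcWitness G P φ i j Q

/-- The directed multigraph `K_{P_ind}` is directed acyclic (no loops and no directed
cycles). -/
def KAcyclic (P : Fin ℓ → InducedPath G) (φ : Fin ℓ → Fin 2 → V) : Prop :=
  ∀ i : Fin ℓ, ¬ Relation.TransGen (KArc G P φ) i i

/-- `Q` is a strand of `P_ind` from `P i` to `P j`. -/
def IsStrand (P : Fin ℓ → InducedPath G) (φ : Fin ℓ → Fin 2 → V) (i j : Fin ℓ)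
    (Q : InducedPath G) : Prop :=
  i ≠ j ∧ IsPathOfInd G P Q ∧ Q.first ≠ φ i 1 ∧ Q.last ≠ φ j 0 ∧
    Q.vertexSet ∩ (P i).vertexSet = {Q.first} ∧
    Q.vertexSet ∩ (P j).vertexSet = {Q.last} ∧
    ∀ k, ¬ PathContains G Q (P k)

/-- `Q` is an internal strand of `P_ind` from `P i` to `P j`. -/
def IsInternalStrand (P : Fin ℓ → InducedPath G) (i j : Fin ℓ) (Q : InducedPath G) : Prop :=
  i ≠ j ∧ IsPathOfInd G P Q ∧
    Q.first ∈ (P i).interior ∧ Q.last ∈ (P j).interior ∧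
    Q.vertexSet ∩ (P i).vertexSet = {Q.first} ∧
    Q.vertexSet ∩ (P j).vertexSet = {Q.last} ∧
    ∀ k, ¬ PathContains G Q (P k)

/-- `(Q, b, c)` is an internal fork of `P_ind` from `P i` to `P j`. -/
def IsInternalFork (P : Fin ℓ → InducedPath G) (i j : Fin ℓ) (Q : InducedPath G)
    (b c : V) : Prop :=
  i ≠ j ∧ IsPathOfInd G P Q ∧ Q.first ∈ (P i).interior ∧
    Q.vertexSet ∩ (P i).vertexSet = {Q.first} ∧
    Q.vertexSet ∩ (P j).vertexSet = ∅ ∧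
    b ∈ (P j).vertexSet ∧ c ∈ (P j).vertexSet ∧ b ≠ c ∧
    G.Adj Q.last b ∧ G.Adj Q.last c ∧
    ∀ k, ¬ PathContains G Q (P k)

/-- `(Q, a, b, c, d)` is a double fork of `P_ind` from `P i` to `P j`. -/
def IsDoubleFork (P : Fin ℓ → InducedPath G) (i j : Fin ℓ) (Q : InducedPath G)
    (a b c d : V) : Prop :=
  i ≠ j ∧ IsPathOfInd G P Q ∧
    Q.vertexSet ∩ (P i).vertexSet = ∅ ∧
    Q.vertexSet ∩ (P j).vertexSet = ∅ ∧
    a ∈ (P i).vertexSet ∧ b ∈ (P i).vertexSet ∧ a ≠ b ∧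
    c ∈ (P j).vertexSet ∧ d ∈ (P j).vertexSet ∧ c ≠ d ∧
    G.Adj Q.first a ∧ G.Adj Q.first b ∧ G.Adj Q.last c ∧ G.Adj Q.last d ∧
    ∀ k, ¬ PathContains G Q (P k)

/-- `(a, b, c, d)` is a complete ladder of `P_ind` between `P i` and `P j`. -/
def IsCompleteLadder (P : Fin ℓ → InducedPath G) (i j : Fin ℓ) (a b c d : V) : Prop :=
  i ≠ j ∧ a ∈ (P i).vertexSet ∧ b ∈ (P i).vertexSet ∧ a ≠ b ∧
    c ∈ (P j).vertexSet ∧ d ∈ (P j).vertexSet ∧ c ≠ d ∧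
    G.Adj a b ∧ G.Adj a c ∧ G.Adj a d ∧ G.Adj b c ∧ G.Adj b d ∧ G.Adj c d

/-- `P_ind` contains an internal strand, an internal fork, a double fork, or a
complete ladder. -/
def HasForbidden (P : Fin ℓ → InducedPath G) : Prop :=
  (∃ i j Q, IsInternalStrand G P i j Q) ∨
  (∃ i j Q b c, IsInternalFork G P i j Q b c) ∨
  (∃ i j Q a b c d, IsDoubleFork G P i j Q a b c d) ∨
  (∃ i j a b c d, IsCompleteLadder G P i j a b c d)

/-- `P_ind` contains a complete ladder, or an internal strand, internal fork, or double
fork which is edge-disjoint from the family `P`. -/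
def HasForbiddenEdgeDisjoint (P : Fin ℓ → InducedPath G) : Prop :=
  (∃ i j Q, IsInternalStrand G P i j Q ∧ Disjoint Q.edgeSet (famEdges G P)) ∨
  (∃ i j Q b c, IsInternalFork G P i j Q b c ∧
    Disjoint (Q.edgeSet ∪ {s(Q.last, b), s(Q.last, c)}) (famEdges G P)) ∨
  (∃ i j Q a b c d, IsDoubleFork G P i j Q a b c d ∧
    Disjoint (Q.edgeSet ∪ {s(Q.first, a), s(Q.first, b), s(Q.last, c), s(Q.last, d)})
      (famEdges G P)) ∨
  (∃ i j a b c d, IsCompleteLadder G P i j a b c d)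

end FamilyDefs

section Invariants

variable {V : Type*}

/-- The invariant `ν(G)`: the maximal total number of edges of a family of
vertex-disjoint induced paths of `G` which is DOIP. -/
noncomputable def nu (G : SimpleGraph V) : ℕ :=
  sSup {n : ℕ | ∃ (ℓ : ℕ) (P : Fin ℓ → InducedPath G),
    PairwiseVertexDisjoint G P ∧ FamilyDOIP G P ∧ n = ∑ i, (P i).walk.length}

/-- `ℓ(G)`: the number of edges of a longest induced path of `G`. -/
noncomputable def longestInducedPathLength (G : SimpleGraph V) : ℕ :=
  sSup {n : ℕ | ∃ P : InducedPath G, n = P.walk.length}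

end Invariants

section BlockGraphs

variable {V : Type*} {G : SimpleGraph V}

/-- A subgraph is biconnected if it is connected and remains connected after
deleting any single vertex. -/
def SubgraphBiconnected (H : G.Subgraph) : Prop :=
  H.coe.Connected ∧ ∀ v : V, ((H.deleteVerts {v}).coe).Connected

/-- A block of `G` is a maximal biconnected subgraph. -/
def IsBlock (H : G.Subgraph) : Prop :=
  SubgraphBiconnected H ∧ ∀ H' : G.Subgraph, SubgraphBiconnected H' → H ≤ H' → H' = H

/-- `G` is a block graph if every block of `G` is a complete graph. -/
def IsBlockGraph (G : SimpleGraph V) : Prop :=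
  ∀ H : G.Subgraph, IsBlock H → ∀ a ∈ H.verts, ∀ b ∈ H.verts, a ≠ b → H.Adj a b

/-- The intersection `Q ∩ R` of two induced paths, as a subgraph of `G`. -/
def pathsInter (Q R : InducedPath G) : G.Subgraph where
  verts := Q.vertexSet ∩ R.vertexSet
  Adj a b := G.Adj a b ∧ s(a, b) ∈ Q.walk.edges ∧ s(a, b) ∈ R.walk.edges
  adj_sub h := h.1
  edge_vert h := ⟨Q.walk.fst_mem_support_of_mem_edges h.2.1,
    R.walk.fst_mem_support_of_mem_edges h.2.2⟩
  symm := by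
    constructor
    intro a b h
    refine ⟨h.1.symm, ?_, ?_⟩
    · rw [Sym2.eq_swap]; exact h.2.1
    · rw [Sym2.eq_swap]; exact h.2.2

/-- `s` is a maximal clique of `G`. -/
def IsMaxClique (G : SimpleGraph V) (s : Set V) : Prop :=
  G.IsClique s ∧ ∀ t : Set V, G.IsClique t → s ⊆ t → s = t

/-- `G` has the two-block property: every vertex belongs to at most two maximal
cliques. -/
def TwoBlockProperty (G : SimpleGraph V) : Prop :=
  ∀ v : V, ({s : Set V | IsMaxClique G s ∧ v ∈ s}).ncard ≤ 2

/-- The completion `G_c` of `G` at the vertex `c`. -/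
def completionAt (G : SimpleGraph V) (c : V) : SimpleGraph V where
  Adj u w := G.Adj u w ∨ (u ≠ w ∧ G.Adj c u ∧ G.Adj c w)
  symm := by
    constructor
    intro u w h
    rcases h with h | ⟨hne, h1, h2⟩
    · exact Or.inl h.symm
    · exact Or.inr ⟨hne.symm, h2, h1⟩
  loopless := by
    constructor
    intro u h
    rcases h with h | ⟨hne, _, _⟩
    · exact G.irrefl h
    · exact hne rfl

/-- The number of connected components of a graph. -/
noncomputable def numComponents (G : SimpleGraph V) : ℕ :=
  Nat.card G.ConnectedComponent

/-- `c` is a cut vertex of `G`: deleting it strictly increases the number of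
connected components. -/
def IsCutVertex (G : SimpleGraph V) (c : V) : Prop :=
  numComponents G < numComponents (G.induce ({c}ᶜ : Set V))

end BlockGraphs

section AuxProof

variable {V : Type*} {G : SimpleGraph V}

lemma le_deleteVerts_of_disjoint {K H : G.Subgraph} {s : Set V} (hle : K ≤ H)
    (hdisj : ∀ v ∈ K.verts, v ∉ s) : K ≤ H.deleteVerts s := by
  constructor
  · intro v hv
    exact ⟨hle.1 hv, hdisj v hv⟩
  · intro u v huv
    rw [Subgraph.deleteVerts_adj]
    exact ⟨hle.1 (K.edge_vert huv), hdisj _ (K.edge_vert huv),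
      hle.1 (K.edge_vert huv.symm), hdisj _ (K.edge_vert huv.symm), hle.2 huv⟩

lemma tailpiece {a b : V} {p : G.Walk a b} (hp : p.IsPath) (hab : a ≠ b) :
    ∃ K : G.Subgraph, K.Connected ∧ K ≤ p.toSubgraph ∧
      K.verts = {w | w ∈ p.support} \ {a} ∧ b ∈ K.verts := by
  cases p with
  | nil => exact absurd rfl hab
  | cons h q =>
    refine ⟨q.toSubgraph, q.toSubgraph_connected, le_sup_right, ?_, ?_⟩
    · rw [Walk.cons_isPath_iff] at hp
      ext w
      simp only [Walk.verts_toSubgraph, Set.mem_setOf_eq, Walk.support_cons, List.mem_cons,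
        Set.mem_diff, Set.mem_singleton_iff]
      constructor
      · intro hw; exact ⟨Or.inr hw, fun he => hp.2 (he ▸ hw)⟩
      · rintro ⟨(rfl | hw), hne⟩
        · exact absurd rfl hne
        · exact hw
    · exact q.end_mem_verts_toSubgraph

lemma midpiece [DecidableEq V] {a b : V} {p : G.Walk a b} (hp : p.IsPath) {v : V}
    (hv : v ∈ p.support) (hva : v ≠ a) (hvb : v ≠ b) :
    ∃ K1 K2 : G.Subgraph, K1.Connected ∧ K2.Connected ∧ K1 ≤ p.toSubgraph ∧
      K2 ≤ p.toSubgraph ∧ a ∈ K1.verts ∧ b ∈ K2.verts ∧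
      K1.verts ∪ K2.verts = {w | w ∈ p.support} \ {v} := by
  have hspec := p.take_spec hv
  have htP : (p.takeUntil v hv).IsPath := hp.takeUntil hv
  have hdP : (p.dropUntil v hv).IsPath := hp.dropUntil hv
  have htle : (p.takeUntil v hv).toSubgraph ≤ p.toSubgraph := by
    conv_rhs => rw [← hspec]
    rw [Walk.toSubgraph_append]; exact le_sup_left
  have hdle : (p.dropUntil v hv).toSubgraph ≤ p.toSubgraph := by
    conv_rhs => rw [← hspec]
    rw [Walk.toSubgraph_append]; exact le_sup_right
  -- K1 from takeUntil reversed
  obtain ⟨K1, hK1c, hK1le, hK1v, hK1a⟩ := tailpiece (p := (p.takeUntil v hv).reverse)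
    htP.reverse hva
  rw [Walk.toSubgraph_reverse] at hK1le
  -- K2 from dropUntil
  obtain ⟨K2, hK2c, hK2le, hK2v, hK2b⟩ := tailpiece hdP hvb
  refine ⟨K1, K2, hK1c, hK2c, hK1le.trans htle, hK2le.trans hdle, hK1a, hK2b, ?_⟩
  rw [hK1v, hK2v]
  have hsupp : p.support = (p.takeUntil v hv).support ++ (p.dropUntil v hv).support.tail := by
    conv_lhs => rw [← hspec]
    exact Walk.support_append _ _
  ext w
  simp only [Set.mem_union, Set.mem_diff, Set.mem_setOf_eq, Set.mem_singleton_iff,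
    Walk.support_reverse, List.mem_reverse, hsupp, List.mem_append]
  have hdropsupp : (p.dropUntil v hv).support = v :: (p.dropUntil v hv).support.tail :=
    Walk.support_eq_cons _
  constructor
  · rintro (⟨hw, hne⟩ | ⟨hw, hne⟩)
    · exact ⟨Or.inl hw, hne⟩
    · refine ⟨Or.inr ?_, hne⟩
      rw [hdropsupp, List.mem_cons] at hw
      rcases hw with rfl | hw
      · exact absurd rfl hne
      · exact hw
  · rintro ⟨hw | hw, hne⟩
    · exact Or.inl ⟨hw, hne⟩
    · refine Or.inr ⟨?_, hne⟩
      rw [hdropsupp]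
      exact List.mem_cons_of_mem _ hw

lemma del_endpoint {a b : V} {D E : G.Walk a b} (hD : D.IsPath) (hE : E.IsPath)
    (hab : a ≠ b) :
    ((D.toSubgraph ⊔ E.toSubgraph).deleteVerts {a}).Connected := by
  obtain ⟨KD, hKDc, hKDle, hKDv, hKDb⟩ := tailpiece hD hab
  obtain ⟨KE, hKEc, hKEle, hKEv, hKEb⟩ := tailpiece hE hab
  have hKc : (KD ⊔ KE).Connected := Subgraph.connected_sup hKDc.preconnected hKEc.preconnected ⟨b, hKDb, hKEb⟩
  refine hKc.mono ?_ ?_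
  · refine le_deleteVerts_of_disjoint (sup_le (hKDle.trans le_sup_left)
      (hKEle.trans le_sup_right)) ?_
    intro x hx
    rcases hx with hx | hx
    · rw [hKDv] at hx; simpa using hx.2
    · rw [hKEv] at hx; simpa using hx.2
  · show KD.verts ∪ KE.verts = _
    rw [hKDv, hKEv, Subgraph.deleteVerts_verts, Subgraph.verts_sup,
      Walk.verts_toSubgraph, Walk.verts_toSubgraph, Set.union_diff_distrib]

lemma del_internal [DecidableEq V] {a b : V} {D E : G.Walk a b} (hD : D.IsPath)
    {v : V} (hv : v ∈ D.support) (hva : v ≠ a) (hvb : v ≠ b) (hvE : v ∉ E.support) :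
    ((D.toSubgraph ⊔ E.toSubgraph).deleteVerts {v}).Connected := by
  obtain ⟨K1, K2, hK1c, hK2c, hK1le, hK2le, hK1a, hK2b, hKv⟩ := midpiece hD hv hva hvb
  have hEc : E.toSubgraph.Connected := E.toSubgraph_connected
  have hinner : (E.toSubgraph ⊔ K2).Connected :=
    Subgraph.connected_sup hEc.preconnected hK2c.preconnected ⟨b, E.end_mem_verts_toSubgraph, hK2b⟩
  have hKc : (K1 ⊔ (E.toSubgraph ⊔ K2)).Connected :=
    Subgraph.connected_sup hK1c.preconnected hinner.preconnected ⟨a, hK1a, Or.inl E.start_mem_verts_toSubgraph⟩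
  have hK1nv : v ∉ K1.verts := by
    intro h
    have : v ∈ K1.verts ∪ K2.verts := Or.inl h
    rw [hKv] at this; simp at this
  have hK2nv : v ∉ K2.verts := by
    intro h
    have : v ∈ K1.verts ∪ K2.verts := Or.inr h
    rw [hKv] at this; simp at this
  refine hKc.mono ?_ ?_
  · refine le_deleteVerts_of_disjoint (sup_le (hK1le.trans le_sup_left)
      (sup_le le_sup_right (hK2le.trans le_sup_left))) ?_
    intro x hx hxv
    rw [Set.mem_singleton_iff] at hxv
    subst hxv
    rcases hx with hx | hx | hx
    · exact hK1nv hx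
    · rw [Walk.mem_verts_toSubgraph] at hx; exact hvE hx
    · exact hK2nv hx
  · show K1.verts ∪ (E.toSubgraph.verts ∪ K2.verts) = _
    rw [Subgraph.deleteVerts_verts, Subgraph.verts_sup, Walk.verts_toSubgraph,
      Walk.verts_toSubgraph]
    ext w
    simp only [Set.mem_union, Set.mem_diff, Set.mem_setOf_eq, Set.mem_singleton_iff]
    constructor
    · rintro (hw | hw | hw)
      · have h2 : w ∈ K1.verts ∪ K2.verts := Or.inl hw
        rw [hKv] at h2
        exact ⟨Or.inl h2.1, h2.2⟩
      · exact ⟨Or.inr hw, fun h => hvE (h ▸ hw)⟩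
      · have h2 : w ∈ K1.verts ∪ K2.verts := Or.inr hw
        rw [hKv] at h2
        exact ⟨Or.inl h2.1, h2.2⟩
    · rintro ⟨hw | hw, hne⟩
      · have : w ∈ K1.verts ∪ K2.verts := by
          rw [hKv]; exact ⟨hw, hne⟩
        rcases this with h | h
        · exact Or.inl h
        · exact Or.inr (Or.inr h)
      · exact Or.inr (Or.inl hw)

lemma biconn_two_paths [DecidableEq V] {a b : V} {D E : G.Walk a b} (hD : D.IsPath)
    (hE : E.IsPath) (hab : a ≠ b)
    (hint : ∀ v, v ∈ D.support → v ∈ E.support → v = a ∨ v = b) :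
    SubgraphBiconnected (D.toSubgraph ⊔ E.toSubgraph) := by
  have hconn : (D.toSubgraph ⊔ E.toSubgraph).Connected :=
    Subgraph.connected_sup D.toSubgraph_connected.preconnected E.toSubgraph_connected.preconnected
      ⟨a, D.start_mem_verts_toSubgraph, E.start_mem_verts_toSubgraph⟩
  refine ⟨hconn.coe, ?_⟩
  intro v
  rcases eq_or_ne v a with rfl | hva
  · exact (del_endpoint hD hE hab).coe
  rcases eq_or_ne v b with rfl | hvb
  · have h2 : ((D.reverse.toSubgraph ⊔ E.reverse.toSubgraph).deleteVerts {v}).Connected :=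
      del_endpoint hD.reverse hE.reverse (Ne.symm hab)
    rw [Walk.toSubgraph_reverse, Walk.toSubgraph_reverse] at h2
    exact h2.coe
  by_cases hvD : v ∈ D.support
  · have hvE : v ∉ E.support := by
      intro h
      rcases hint v hvD h with rfl | rfl
      · exact hva rfl
      · exact hvb rfl
    exact (del_internal hD hvD hva hvb hvE).coe
  by_cases hvE : v ∈ E.support
  · have h2 : ((E.toSubgraph ⊔ D.toSubgraph).deleteVerts {v}).Connected :=
      del_internal hE hvE hva hvb hvD
    rw [sup_comm] at h2
    exact h2.coe
  · -- v not in H at all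
    have hH : (D.toSubgraph ⊔ E.toSubgraph).Connected := hconn
    refine (hH.mono ?_ ?_).coe
    · refine le_deleteVerts_of_disjoint le_rfl ?_
      intro x hx hxv
      rw [Set.mem_singleton_iff] at hxv
      subst hxv
      rcases hx with hx | hx <;> rw [Walk.mem_verts_toSubgraph] at hx
      · exact hvD hx
      · exact hvE hx
    · rw [Subgraph.deleteVerts_verts]
      ext w
      simp only [Set.mem_diff, Set.mem_singleton_iff]
      refine ⟨fun hw => ⟨hw, ?_⟩, fun hw => hw.1⟩
      rintro rfl
      rcases hw with hx | hx <;> rw [Walk.mem_verts_toSubgraph] at hx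
      · exact hvD hx
      · exact hvE hx

lemma subgraph_finite [Finite V] : Finite (G.Subgraph) := by
  have : Function.Injective (fun H : G.Subgraph => (H.verts, H.Adj)) := by
    intro H K h
    rw [Prod.mk.injEq] at h
    exact Subgraph.ext h.1 h.2
  exact Finite.of_injective _ this

lemma exists_block_ge [Finite V] {H : G.Subgraph} (hH : SubgraphBiconnected H) :
    ∃ H' : G.Subgraph, (SubgraphBiconnected H' ∧
      ∀ H'' : G.Subgraph, SubgraphBiconnected H'' → H' ≤ H'' → H'' = H') ∧ H ≤ H' := by
  have : Finite (G.Subgraph) := subgraph_finite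
  have hfin : {K : G.Subgraph | SubgraphBiconnected K ∧ H ≤ K}.Finite := Set.toFinite _
  obtain ⟨H', hH', hmax⟩ := hfin.exists_maximal ⟨H, hH, le_rfl⟩
  refine ⟨H', ⟨hH'.1, ?_⟩, hH'.2⟩
  intro H'' hb hle
  exact le_antisymm (hmax ⟨hb, hH'.2.trans hle⟩ hle) hle

lemma clique_of_two_paths [Finite V] [DecidableEq V] (hBG : IsBlockGraph G) {a b : V}
    {D E : G.Walk a b} (hD : D.IsPath) (hE : E.IsPath) (hab : a ≠ b)
    (hint : ∀ v, v ∈ D.support → v ∈ E.support → v = a ∨ v = b) :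
    ∀ x y, (x ∈ D.support ∨ x ∈ E.support) → (y ∈ D.support ∨ y ∈ E.support) →
      x ≠ y → G.Adj x y := by
  have hbi := biconn_two_paths hD hE hab hint
  obtain ⟨H', ⟨hb, hmax⟩, hle⟩ := exists_block_ge hbi
  intro x y hx hy hxy
  have hmem : ∀ z, (z ∈ D.support ∨ z ∈ E.support) → z ∈ H'.verts := by
    intro z hz
    apply hle.1
    rcases hz with hz | hz
    · exact Or.inl (D.mem_verts_toSubgraph.2 hz)
    · exact Or.inr (E.mem_verts_toSubgraph.2 hz)
  exact ((hBG H' ⟨hb, hmax⟩ x (hmem x hx) y (hmem y hy) hxy)).adj_sub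

lemma no_chord {u w a x z : V} {pA : G.Walk u a} {h1 : G.Adj a x} {h2 : G.Adj x z}
    {pB : G.Walk z w} (hp : (pA.append (Walk.cons h1 (Walk.cons h2 pB))).IsPath) :
    s(a, z) ∉ (pA.append (Walk.cons h1 (Walk.cons h2 pB))).edges := by
  have hnd := hp.support_nodup
  rw [Walk.support_append] at hnd
  simp only [Walk.support_cons, List.tail_cons] at hnd
  rw [List.nodup_append] at hnd
  obtain ⟨hndA, hndT, hdisj⟩ := hnd
  have haA : a ∈ pA.support := pA.end_mem_support
  have hzT : z ∈ x :: pB.support := List.mem_cons_of_mem x pB.start_mem_support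
  have hax : a ≠ x := fun h => hdisj _ haA _ List.mem_cons_self h
  have haz : a ≠ z := fun h => hdisj _ haA _ hzT h
  have hxz : x ≠ z := by
    rw [List.nodup_cons] at hndT
    exact fun h => hndT.1 (by rw [h]; exact pB.start_mem_support)
  intro he
  rw [Walk.edges_append, List.mem_append] at he
  rcases he with he | he
  · exact hdisj _ (pA.snd_mem_support_of_mem_edges he) _ hzT rfl
  · simp only [Walk.edges_cons, List.mem_cons] at he
    rcases he with he | he | he
    · rw [Sym2.eq_iff] at he
      rcases he with ⟨-, hzx⟩ | ⟨hax', -⟩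
      · exact hxz hzx.symm
      · exact hax hax'
    · rw [Sym2.eq_iff] at he
      rcases he with ⟨hax', -⟩ | ⟨haz', -⟩
      · exact hax hax'
      · exact haz haz'
    · exact hdisj _ haA _ (List.mem_cons_of_mem x (pB.fst_mem_support_of_mem_edges he)) rfl

lemma first_return {S : Set V} {u w : V} (q : G.Walk u w) (hw : w ∈ S) :
    ∃ (b : V) (q₁ : G.Walk u b) (q₂ : G.Walk b w), b ∈ S ∧ q = q₁.append q₂ ∧
      ∀ x ∈ q₁.support, x ∈ S → x = b := by
  classical
  induction q with
  | nil =>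
    exact ⟨_, Walk.nil, Walk.nil, hw, rfl, by simp⟩
  | cons h r ih =>
    rename_i u' y w'
    by_cases hu : u' ∈ S
    · refine ⟨u', Walk.nil, Walk.cons h r, hu, rfl, ?_⟩
      intro x hx _
      simpa using hx
    · obtain ⟨b, r₁, r₂, hb, hr, hcond⟩ := ih hw
      refine ⟨b, Walk.cons h r₁, r₂, hb, by rw [hr, Walk.cons_append], ?_⟩
      intro x hx hxS
      rw [Walk.support_cons, List.mem_cons] at hx
      rcases hx with rfl | hx
      · exact absurd hxS hu
      · exact hcond x hx hxS

lemma exists_excursion {S : Set V} {u w : V} (p : G.Walk u w) :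
    u ∈ S → w ∈ S → (∃ x ∈ p.support, x ∉ S) →
    ∃ (a x' z b : V) (h1 : G.Adj a x') (h2 : G.Adj x' z) (rest : G.Walk z b)
      (p₁ : G.Walk u a) (p₂ : G.Walk b w),
      p = p₁.append ((Walk.cons h1 (Walk.cons h2 rest)).append p₂) ∧ a ∈ S ∧ b ∈ S ∧
        ∀ x ∈ (Walk.cons h1 (Walk.cons h2 rest)).support, x ∈ S → x = a ∨ x = b := by
  classical
  induction p with
  | nil =>
    intro hu _ hbad
    obtain ⟨x, hx, hxS⟩ := hbad
    rw [Walk.support_nil, List.mem_singleton] at hx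
    exact absurd (hx ▸ hu) hxS
  | cons h r ih =>
    intro hu hw hbad
    rename_i u' y w' 
    by_cases hy : y ∈ S
    · have hbad' : ∃ x ∈ r.support, x ∉ S := by
        obtain ⟨x, hx, hxS⟩ := hbad
        rw [Walk.support_cons, List.mem_cons] at hx
        rcases hx with rfl | hx
        · exact absurd hu hxS
        · exact ⟨x, hx, hxS⟩
      obtain ⟨a, x', z, b, h1, h2, rest, p₁, p₂, hsplit, ha, hb, hcond⟩ := ih hy hw hbad'
      exact ⟨a, x', z, b, h1, h2, rest, Walk.cons h p₁, p₂,
        by rw [hsplit]; simp [Walk.cons_append], ha, hb, hcond⟩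
    · obtain ⟨b, q₁, q₂, hb, hr, hcond⟩ := first_return r hw
      cases q₁ with
      | nil => exact absurd hb hy
      | cons h2 rest =>
        refine ⟨u', y, _, b, h, h2, rest, Walk.nil, q₂, ?_, hu, hb, ?_⟩
        · rw [hr]; simp [Walk.cons_append]
        · intro x hx hxS
          rw [Walk.support_cons, List.mem_cons] at hx
          rcases hx with rfl | hx
          · exact Or.inl rfl
          · exact Or.inr (hcond x hx hxS)

lemma subpath_between [DecidableEq V] {r1 r2 : V} {rw : G.Walk r1 r2} (hrw : rw.IsPath)
    {a b : V} (ha : a ∈ rw.support) (hb : b ∈ rw.support) :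
    ∃ E : G.Walk a b, E.IsPath ∧ ∀ x ∈ E.support, x ∈ rw.support := by
  by_cases hbd : b ∈ (rw.dropUntil a ha).support
  · refine ⟨(rw.dropUntil a ha).takeUntil b hbd, (hrw.dropUntil ha).takeUntil hbd, ?_⟩
    intro x hx
    exact rw.support_dropUntil_subset ha ((rw.dropUntil a ha).support_takeUntil_subset hbd hx)
  · have hbt : b ∈ (rw.takeUntil a ha).support := by
      have := rw.take_spec ha
      have hmem : b ∈ ((rw.takeUntil a ha).append (rw.dropUntil a ha)).support := by
        rw [this]; exact hb
      rw [Walk.mem_support_append_iff] at hmem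
      rcases hmem with hmem | hmem
      · exact hmem
      · exact absurd hmem hbd
    refine ⟨((rw.takeUntil a ha).dropUntil b hbt).reverse,
      ((hrw.takeUntil ha).dropUntil hbt).reverse, ?_⟩
    intro x hx
    rw [Walk.support_reverse, List.mem_reverse] at hx
    exact rw.support_takeUntil_subset ha
      ((rw.takeUntil a ha).support_dropUntil_subset hbt hx)

lemma prefix_in_path [Finite V] [DecidableEq V] (hBG : IsBlockGraph G)
    {u w r1 r2 : V} {q : G.Walk u w} (hq : q.IsPath)
    (hqind : ∀ x ∈ q.support, ∀ y ∈ q.support, G.Adj x y → s(x, y) ∈ q.edges)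
    {rw : G.Walk r1 r2} (hrw : rw.IsPath)
    (hrind : ∀ x ∈ rw.support, ∀ y ∈ rw.support, G.Adj x y → s(x, y) ∈ rw.edges)
    (hu : u ∈ rw.support) :
    ∃ (c : V) (hc : c ∈ q.support),
      (∀ x ∈ (q.takeUntil c hc).support, x ∈ rw.support) ∧
      (∀ e ∈ (q.takeUntil c hc).edges, e ∈ rw.edges) ∧
      (∀ x ∈ (q.dropUntil c hc).support, x ∈ rw.support → x = c) := by
  classical
  set F := q.support.filter (fun v => decide (v ∈ rw.support)) with hF
  have huF : u ∈ F := by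
    rw [hF, List.mem_filter]
    exact ⟨q.start_mem_support, by simpa using hu⟩
  have hFne : F ≠ [] := List.ne_nil_of_mem huF
  set c := F.getLast hFne with hcdef
  have hcF : c ∈ F := List.getLast_mem hFne
  have hcq : c ∈ q.support := (List.mem_filter.1 hcF).1
  have hcS : c ∈ rw.support := by simpa using (List.mem_filter.1 hcF).2
  have hverts : ∀ x ∈ (q.takeUntil c hcq).support, x ∈ rw.support := by
    by_contra hcon
    push_neg at hcon
    obtain ⟨x0, hx0, hx0S⟩ := hcon
    obtain ⟨a, x', z, b, h1, h2, rest, p₁, p₂, hsplit, ha, hb, hcond⟩ :=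
      exists_excursion (S := {v | v ∈ rw.support}) (q.takeUntil c hcq) hu hcS
        ⟨x0, hx0, hx0S⟩
    have htp : (q.takeUntil c hcq).IsPath := hq.takeUntil hcq
    have hDp : (Walk.cons h1 (Walk.cons h2 rest)).IsPath := by
      have h3 := htp
      rw [hsplit] at h3
      exact h3.of_append_right.of_append_left
    have hDp' := hDp
    rw [Walk.cons_isPath_iff] at hDp'
    have hab : a ≠ b := by
      intro hh
      apply hDp'.2
      rw [hh]
      exact Walk.end_mem_support _
    obtain ⟨E, hEp, hEsub⟩ := subpath_between hrw (a := a) (b := b) ha hb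
    have hint : ∀ v, v ∈ (Walk.cons h1 (Walk.cons h2 rest)).support →
        v ∈ E.support → v = a ∨ v = b := by
      intro v hvD hvE
      exact hcond v hvD (hEsub v hvE)
    have hclique := clique_of_two_paths hBG hDp hEp hab hint
    have hzD : z ∈ (Walk.cons h2 rest).support := by
      rw [Walk.support_cons]
      exact List.mem_cons_of_mem _ rest.start_mem_support
    have haz : a ≠ z := by
      intro hh
      apply hDp'.2
      rw [hh]
      exact hzD
    have hadj : G.Adj a z := by
      refine hclique a z (Or.inl (Walk.start_mem_support _)) (Or.inl ?_) haz
      rw [Walk.support_cons]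
      exact List.mem_cons_of_mem _ hzD
    have hqsplit : q = p₁.append (Walk.cons h1 (Walk.cons h2
        (rest.append (p₂.append (q.dropUntil c hcq))))) := by
      conv_lhs => rw [← q.take_spec hcq]
      rw [hsplit]
      simp [← Walk.append_assoc, Walk.cons_append]
    have hqp := hq
    rw [hqsplit] at hqp
    have haq : a ∈ q.support := by
      rw [hqsplit, Walk.mem_support_append_iff]
      exact Or.inl (Walk.end_mem_support _)
    have hzq : z ∈ q.support := by
      rw [hqsplit, Walk.mem_support_append_iff]
      right
      rw [Walk.support_cons, Walk.support_cons]
      exact List.mem_cons_of_mem _ (List.mem_cons_of_mem _ (Walk.start_mem_support _))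
    have hedge : s(a, z) ∈ q.edges := hqind a haq z hzq hadj
    rw [hqsplit] at hedge
    exact no_chord (pA := p₁) (h1 := h1) (h2 := h2)
      (pB := rest.append (p₂.append (q.dropUntil c hcq))) hqp hedge
  have hedges : ∀ e ∈ (q.takeUntil c hcq).edges, e ∈ rw.edges := by
    intro e
    refine Sym2.ind (fun x y he => ?_) e
    exact hrind x (hverts x (Walk.fst_mem_support_of_mem_edges _ he))
      y (hverts y (Walk.snd_mem_support_of_mem_edges _ he))
      (Walk.adj_of_mem_edges _ he)
  refine ⟨c, hcq, hverts, hedges, ?_⟩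
  · -- nothing in rw.support after c
    intro x hx hxS
    have hdsupp : (q.dropUntil c hcq).support = c :: (q.dropUntil c hcq).support.tail :=
      Walk.support_eq_cons _
    rw [hdsupp, List.mem_cons] at hx
    rcases hx with rfl | hx
    · rfl
    · exfalso
      have hsupp : q.support =
          (q.takeUntil c hcq).support ++ (q.dropUntil c hcq).support.tail := by
        conv_lhs => rw [← q.take_spec hcq]
        exact Walk.support_append _ _
      have hFsplit : F = (q.takeUntil c hcq).support.filter (fun v => decide (v ∈ rw.support))
          ++ (q.dropUntil c hcq).support.tail.filter (fun v => decide (v ∈ rw.support)) := by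
        rw [hF, hsupp, List.filter_append]
      have hxF : x ∈ (q.dropUntil c hcq).support.tail.filter
          (fun v => decide (v ∈ rw.support)) := by
        rw [List.mem_filter]
        exact ⟨hx, by simpa using hxS⟩
      have htne : (q.dropUntil c hcq).support.tail.filter
          (fun v => decide (v ∈ rw.support)) ≠ [] := List.ne_nil_of_mem hxF
      have hclast : c ∈ (q.dropUntil c hcq).support.tail := by
        have hc? : F.getLast? = some c := List.getLast?_eq_getLast hFne
        rw [hFsplit, List.getLast?_append,
          List.getLast?_eq_getLast htne, Option.some_or] at hc?
        have hcmem := Option.some.inj hc? ▸ List.getLast_mem htne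
        exact (List.mem_filter.1 hcmem).1
      -- c is also in takeUntil's support; contradiction with nodup
      have hct : c ∈ (q.takeUntil c hcq).support := Walk.end_mem_support _
      have hnd := hq.support_nodup
      rw [hsupp, List.nodup_append] at hnd
      exact hnd.2.2 _ hct _ hclast rfl

lemma prefix_eq_of_getLast_mem {α : Type*} {l₁ l₂ : List α} (h : l₁ <+: l₂)
    (hnd : l₂.Nodup) (h₂ : l₂ ≠ []) (hl : l₂.getLast h₂ ∈ l₁) : l₁ = l₂ := by
  obtain ⟨t, rfl⟩ := h
  rcases eq_or_ne t [] with rfl | htne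
  · simp
  · exfalso
    have hg : (l₁ ++ t).getLast h₂ = t.getLast htne := List.getLast_append_of_ne_nil h₂ htne
    have hmem : (l₁ ++ t).getLast h₂ ∈ t := hg ▸ List.getLast_mem htne
    rw [List.nodup_append] at hnd
    exact hnd.2.2 _ hl _ hmem rfl

lemma append_split_left_eq : ∀ {u vv w : V} (A A' : G.Walk u vv) (B B' : G.Walk vv w),
    A.append B = A'.append B' → A.length = A'.length → A = A' ∧ B = B' := by
  intro u vv w A
  induction A with
  | nil =>
    intro A' B B' h hl
    have : A' = Walk.nil := by
      rw [← Walk.nil_iff_eq_nil, Walk.nil_iff_length_eq]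
      simpa using hl.symm
    subst this
    exact ⟨rfl, by simpa using h⟩
  | cons hadj p ih =>
    intro A' B B' h hl
    cases A' with
    | nil => simp at hl
    | cons hadj' p' =>
      rw [Walk.cons_append, Walk.cons_append] at h
      injection h with hu hv hw hp
      subst hv
      obtain ⟨hA, hB⟩ := ih p' B B' (eq_of_heq hp) (by simpa using hl)
      exact ⟨by rw [hA], hB⟩

lemma walk_getLast? {a b : V} (p : G.Walk a b) : p.support.getLast? = some b := by
  rw [List.getLast?_eq_getLast p.support_ne_nil]
  exact congrArg some p.getLast_support

lemma walk_support_prefix {a b w : V} (p : G.Walk a b) (q : G.Walk b w) :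
    p.support <+: (p.append q).support :=
  ⟨q.support.tail, (Walk.support_append _ _).symm⟩

lemma halfsplit {c w : V} {S2 : Set V} {B : G.Walk c w} (hB : B.IsPath)
    {d d₂ : V} {g : G.Walk c d} {q2 : G.Walk d w} {g₂ : G.Walk c d₂} {q2₂ : G.Walk d₂ w}
    (h : B = g.append q2) (h₂ : B = g₂.append q2₂)
    (hg2 : {v | v ∈ g.support} ∩ S2 = {d}) (hg2₂ : {v | v ∈ g₂.support} ∩ S2 = {d₂}) :
    d₂ = d ∧ HEq g₂ g ∧ HEq q2₂ q2 := by
  have hdS2 : d ∈ S2 := by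
    have hd : d ∈ ({d} : Set V) := rfl
    rw [← hg2] at hd
    exact hd.2
  have hd₂S2 : d₂ ∈ S2 := by
    have hd : d₂ ∈ ({d₂} : Set V) := rfl
    rw [← hg2₂] at hd
    exact hd.2
  have hgp : g.IsPath := by
    have hB' := hB; rw [h] at hB'; exact hB'.of_append_left
  have hg₂p : g₂.IsPath := by
    have hB' := hB; rw [h₂] at hB'; exact hB'.of_append_left
  have pg : g.support <+: B.support := by rw [h]; exact walk_support_prefix _ _
  have pg₂ : g₂.support <+: B.support := by rw [h₂]; exact walk_support_prefix _ _
  have hsup : g.support = g₂.support := by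
    rcases List.prefix_or_prefix_of_prefix pg pg₂ with hp | hp
    · have hd : d ∈ g₂.support := hp.sublist.mem g.end_mem_support
      have hdd : d = d₂ := by
        have hmem : d ∈ {v | v ∈ g₂.support} ∩ S2 := ⟨hd, hdS2⟩
        rw [hg2₂] at hmem
        exact hmem
      refine prefix_eq_of_getLast_mem hp hg₂p.support_nodup g₂.support_ne_nil ?_
      have e : g₂.support.getLast g₂.support_ne_nil = d₂ := g₂.getLast_support
      rw [e, ← hdd]
      exact g.end_mem_support
    · have hd : d₂ ∈ g.support := hp.sublist.mem g₂.end_mem_support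
      have hdd : d₂ = d := by
        have hmem : d₂ ∈ {v | v ∈ g.support} ∩ S2 := ⟨hd, hd₂S2⟩
        rw [hg2] at hmem
        exact hmem
      refine (prefix_eq_of_getLast_mem hp hgp.support_nodup g.support_ne_nil ?_).symm
      have e : g.support.getLast g.support_ne_nil = d := g.getLast_support
      rw [e, ← hdd]
      exact g₂.end_mem_support
  have hdd : d₂ = d := by
    have e1 : some d = some d₂ := by
      rw [← walk_getLast? g, ← walk_getLast? g₂, hsup]
    exact (Option.some.inj e1).symm
  subst hdd
  have hlen : g.length = g₂.length := by
    have := congrArg List.length hsup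
    rw [Walk.length_support, Walk.length_support] at this
    omega
  obtain ⟨hg, hq2⟩ := append_split_left_eq g g₂ q2 q2₂ (h.symm.trans h₂) hlen
  exact ⟨rfl, heq_of_eq hg.symm, heq_of_eq hq2.symm⟩

lemma fullsplit {u w : V} {S1 S2 : Set V} (hdisj : Disjoint S1 S2) {q : G.Walk u w}
    (hq : q.IsPath)
    {c d : V} {q1 : G.Walk u c} {g : G.Walk c d} {q2 : G.Walk d w}
    {c₂ d₂ : V} {q1₂ : G.Walk u c₂} {g₂ : G.Walk c₂ d₂} {q2₂ : G.Walk d₂ w}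
    (h : q = q1.append (g.append q2)) (h₂ : q = q1₂.append (g₂.append q2₂))
    (hq1 : ∀ x ∈ q1.support, x ∈ S1) (hg1 : {v | v ∈ g.support} ∩ S1 = {c})
    (hq2 : ∀ x ∈ q2.support, x ∈ S2) (hg2 : {v | v ∈ g.support} ∩ S2 = {d})
    (hq1₂ : ∀ x ∈ q1₂.support, x ∈ S1) (hg1₂ : {v | v ∈ g₂.support} ∩ S1 = {c₂})
    (hq2₂ : ∀ x ∈ q2₂.support, x ∈ S2) (hg2₂ : {v | v ∈ g₂.support} ∩ S2 = {d₂}) :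
    c₂ = c ∧ d₂ = d ∧ HEq q1₂ q1 ∧ HEq g₂ g ∧ HEq q2₂ q2 := by
  have claimA : ∀ v, v ∈ q.support → v ∈ S1 → v ∈ q1.support := by
    intro v hv hvS
    rw [h, Walk.mem_support_append_iff, Walk.mem_support_append_iff] at hv
    rcases hv with hv | hv | hv
    · exact hv
    · have hmem : v ∈ {x | x ∈ g.support} ∩ S1 := ⟨hv, hvS⟩
      rw [hg1] at hmem
      rw [hmem]
      exact q1.end_mem_support
    · exact absurd (hq2 v hv) (Set.disjoint_left.mp hdisj hvS)
  have claimA₂ : ∀ v, v ∈ q.support → v ∈ S1 → v ∈ q1₂.support := by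
    intro v hv hvS
    rw [h₂, Walk.mem_support_append_iff, Walk.mem_support_append_iff] at hv
    rcases hv with hv | hv | hv
    · exact hv
    · have hmem : v ∈ {x | x ∈ g₂.support} ∩ S1 := ⟨hv, hvS⟩
      rw [hg1₂] at hmem
      rw [hmem]
      exact q1₂.end_mem_support
    · exact absurd (hq2₂ v hv) (Set.disjoint_left.mp hdisj hvS)
  have hcq : c ∈ q.support := by
    rw [h, Walk.mem_support_append_iff]
    exact Or.inl q1.end_mem_support
  have hc₂q : c₂ ∈ q.support := by
    rw [h₂, Walk.mem_support_append_iff]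
    exact Or.inl q1₂.end_mem_support
  have hcS : c ∈ S1 := hq1 c q1.end_mem_support
  have hc₂S : c₂ ∈ S1 := hq1₂ c₂ q1₂.end_mem_support
  have hq1p : q1.IsPath := by
    have hq' := hq; rw [h] at hq'; exact hq'.of_append_left
  have hq1₂p : q1₂.IsPath := by
    have hq' := hq; rw [h₂] at hq'; exact hq'.of_append_left
  have p1 : q1.support <+: q.support := by rw [h]; exact walk_support_prefix _ _
  have p1₂ : q1₂.support <+: q.support := by rw [h₂]; exact walk_support_prefix _ _
  have hsup : q1.support = q1₂.support := by
    rcases List.prefix_or_prefix_of_prefix p1 p1₂ with hp | hp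
    · refine prefix_eq_of_getLast_mem hp hq1₂p.support_nodup q1₂.support_ne_nil ?_
      have e : q1₂.support.getLast q1₂.support_ne_nil = c₂ := q1₂.getLast_support
      rw [e]
      exact claimA c₂ hc₂q hc₂S
    · refine (prefix_eq_of_getLast_mem hp hq1p.support_nodup q1.support_ne_nil ?_).symm
      have e : q1.support.getLast q1.support_ne_nil = c := q1.getLast_support
      rw [e]
      exact claimA₂ c hcq hcS
  have hcc : c₂ = c := by
    have e1 : some c = some c₂ := by
      rw [← walk_getLast? q1, ← walk_getLast? q1₂, hsup]
    exact (Option.some.inj e1).symm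
  subst hcc
  have hlen : q1.length = q1₂.length := by
    have := congrArg List.length hsup
    rw [Walk.length_support, Walk.length_support] at this
    omega
  obtain ⟨hA, hB⟩ := append_split_left_eq q1 q1₂ _ _ (h.symm.trans h₂) hlen
  have hBp : (g.append q2).IsPath := by
    have hq' := hq; rw [h] at hq'; exact hq'.of_append_right
  obtain ⟨hdd, hg, hq2e⟩ := halfsplit hBp rfl hB hg2 hg2₂
  exact ⟨rfl, hdd, heq_of_eq hA.symm, hg, hq2e⟩

lemma ind_reverse {a b : V} {p : G.Walk a b}
    (hind : ∀ x ∈ p.support, ∀ y ∈ p.support, G.Adj x y → s(x, y) ∈ p.edges) :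
    ∀ x ∈ p.reverse.support, ∀ y ∈ p.reverse.support, G.Adj x y →
      s(x, y) ∈ p.reverse.edges := by
  intro x hx y hy hadj
  rw [Walk.support_reverse, List.mem_reverse] at hx hy
  rw [Walk.edges_reverse, List.mem_reverse]
  exact hind x hx y hy hadj


end AuxProof

/-- **Theorem (Statement 7).** Let `R₁`, `R₂` be vertex-disjoint induced paths of a
finite simple block graph and let `Q` be an induced path from the first vertex of `R₁`
to the last vertex of `R₂`. Then `Q` decomposes uniquely as `Q₁ * γ * Q₂` where `Q₁`
is a subpath of `R₁`, `Q₂` is a subpath of `R₂`, and `γ` meets each of `R₁`, `R₂` in a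
single vertex. -/
theorem blockGraph_inducedPath_between_two_paths_decomposition {V : Type*} [Fintype V]
    [DecidableEq V] {G : SimpleGraph V} (hBG : IsBlockGraph G)
    (R1 R2 Q : InducedPath G) (hdisj : Disjoint R1.vertexSet R2.vertexSet)
    (hfirst : Q.first = R1.first) (hlast : Q.last = R2.last) :
    ∃ (c d : V) (q1 : G.Walk Q.first c) (g : G.Walk c d) (q2 : G.Walk d Q.last),
      Q.walk = q1.append (g.append q2) ∧
      {v : V | v ∈ q1.support} ⊆ R1.vertexSet ∧
      {e : Sym2 V | e ∈ q1.edges} ⊆ R1.edgeSet ∧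
      {v : V | v ∈ q2.support} ⊆ R2.vertexSet ∧
      {e : Sym2 V | e ∈ q2.edges} ⊆ R2.edgeSet ∧
      {v : V | v ∈ g.support} ∩ R1.vertexSet = {c} ∧
      {v : V | v ∈ g.support} ∩ R2.vertexSet = {d} ∧
      ∀ (c₂ d₂ : V) (q1₂ : G.Walk Q.first c₂) (g₂ : G.Walk c₂ d₂) (q2₂ : G.Walk d₂ Q.last),
        Q.walk = q1₂.append (g₂.append q2₂) →
        {v : V | v ∈ q1₂.support} ⊆ R1.vertexSet →
        {e : Sym2 V | e ∈ q1₂.edges} ⊆ R1.edgeSet →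
        {v : V | v ∈ q2₂.support} ⊆ R2.vertexSet →
        {e : Sym2 V | e ∈ q2₂.edges} ⊆ R2.edgeSet →
        {v : V | v ∈ g₂.support} ∩ R1.vertexSet = {c₂} →
        {v : V | v ∈ g₂.support} ∩ R2.vertexSet = {d₂} →
        c₂ = c ∧ d₂ = d ∧ HEq q1₂ q1 ∧ HEq g₂ g ∧ HEq q2₂ q2 := by
  classical
  obtain ⟨c, hc, h1v, h1e, h1after⟩ := prefix_in_path hBG Q.isPath Q.induced R1.isPath
    R1.induced (by rw [hfirst]; exact R1.walk.start_mem_support)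
  set q1 := Q.walk.takeUntil c hc with hq1def
  set rest := Q.walk.dropUntil c hc with hrestdef
  have hQsplit : Q.walk = q1.append rest := (Q.walk.take_spec hc).symm
  have hrestp : rest.IsPath := Q.isPath.dropUntil hc
  have hq1p : q1.IsPath := Q.isPath.takeUntil hc
  have hsupp : Q.walk.support = q1.support ++ rest.support.tail := by
    rw [hQsplit]; exact Walk.support_append _ _
  have hnd := Q.isPath.support_nodup
  rw [hsupp, List.nodup_append] at hnd
  have hinter : ∀ x, x ∈ q1.support → x ∈ rest.support → x = c := by
    intro x hx1 hx2
    rw [Walk.support_eq_cons rest, List.mem_cons] at hx2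
    rcases hx2 with rfl | hx2
    · rfl
    · exact absurd hx2 (fun hh => hnd.2.2 _ hx1 _ hh rfl)
  have hrestind : ∀ x ∈ rest.support, ∀ y ∈ rest.support, G.Adj x y →
      s(x, y) ∈ rest.edges := by
    intro x hx y hy hadj
    have hxq : x ∈ Q.walk.support := by
      rw [hQsplit, Walk.mem_support_append_iff]; exact Or.inr hx
    have hyq : y ∈ Q.walk.support := by
      rw [hQsplit, Walk.mem_support_append_iff]; exact Or.inr hy
    have he := Q.induced x hxq y hyq hadj
    rw [hQsplit, Walk.edges_append, List.mem_append] at he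
    rcases he with he | he
    · exfalso
      have hx1 : x ∈ q1.support := q1.fst_mem_support_of_mem_edges he
      have hy1 : y ∈ q1.support := q1.snd_mem_support_of_mem_edges he
      have hxc := hinter x hx1 hx
      have hyc := hinter y hy1 hy
      exact hadj.ne (hxc.trans hyc.symm)
    · exact he
  obtain ⟨d, hd, h2v, h2e, h2after⟩ := prefix_in_path hBG hrestp.reverse
    (ind_reverse hrestind) R2.isPath.reverse (ind_reverse R2.induced)
    (by rw [Walk.support_reverse, List.mem_reverse, hlast]; exact R2.walk.end_mem_support)
  set t2 := rest.reverse.takeUntil d hd with ht2def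
  set drop2 := rest.reverse.dropUntil d hd with hdrop2def
  set g : G.Walk c d := drop2.reverse with hgdef
  set q2 : G.Walk d Q.last := t2.reverse with hq2def
  have hrestsplit : rest = g.append q2 := by
    conv_lhs => rw [← rest.reverse_reverse]
    conv_lhs => rw [← rest.reverse.take_spec hd]
    rw [Walk.reverse_append]
  -- basic membership facts
  have hgsup : ∀ x, x ∈ g.support ↔ x ∈ drop2.support := by
    intro x; rw [hgdef, Walk.support_reverse, List.mem_reverse]
  have hq2sup : ∀ x, x ∈ q2.support ↔ x ∈ t2.support := by
    intro x; rw [hq2def, Walk.support_reverse, List.mem_reverse]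
  have hgrest : ∀ x, x ∈ g.support → x ∈ rest.support := by
    intro x hx
    rw [hgsup] at hx
    have := rest.reverse.support_dropUntil_subset hd hx
    rw [Walk.support_reverse, List.mem_reverse] at this
    exact this
  have hcR1 : c ∈ R1.vertexSet := h1v c q1.end_mem_support
  have hdR2 : d ∈ R2.vertexSet := by
    have hdt : d ∈ t2.support := t2.end_mem_support
    have := h2v d hdt
    rw [Walk.support_reverse, List.mem_reverse] at this
    exact this
  have hset1v : {v : V | v ∈ q1.support} ⊆ R1.vertexSet := fun x hx => h1v x hx
  have hset1e : {e : Sym2 V | e ∈ q1.edges} ⊆ R1.edgeSet := fun e he => h1e e he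
  have hset2v : {v : V | v ∈ q2.support} ⊆ R2.vertexSet := by
    intro x hx
    rw [Set.mem_setOf_eq, hq2sup] at hx
    have := h2v x hx
    rw [Walk.support_reverse, List.mem_reverse] at this
    exact this
  have hset2e : {e : Sym2 V | e ∈ q2.edges} ⊆ R2.edgeSet := by
    intro e he
    rw [Set.mem_setOf_eq, hq2def, Walk.edges_reverse, List.mem_reverse] at he
    have := h2e e he
    rw [Walk.edges_reverse, List.mem_reverse] at this
    exact this
  have hgR1 : {v : V | v ∈ g.support} ∩ R1.vertexSet = {c} := by
    ext x
    simp only [Set.mem_inter_iff, Set.mem_setOf_eq, Set.mem_singleton_iff]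
    constructor
    · rintro ⟨hxg, hxR⟩
      exact h1after x (hgrest x hxg) hxR
    · rintro rfl
      exact ⟨Walk.start_mem_support _, hcR1⟩
  have hgR2 : {v : V | v ∈ g.support} ∩ R2.vertexSet = {d} := by
    ext x
    simp only [Set.mem_inter_iff, Set.mem_setOf_eq, Set.mem_singleton_iff]
    constructor
    · rintro ⟨hxg, hxR⟩
      rw [hgsup] at hxg
      refine h2after x hxg ?_
      rw [Walk.support_reverse, List.mem_reverse]
      exact hxR
    · rintro rfl
      exact ⟨Walk.end_mem_support _, hdR2⟩
  have hQfull : Q.walk = q1.append (g.append q2) := by rw [hQsplit, hrestsplit]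
  refine ⟨c, d, q1, g, q2, hQfull, hset1v, hset1e, hset2v, hset2e, hgR1, hgR2, ?_⟩
  intro c₂ d₂ q1₂ g₂ q2₂ heq hv1 he1 hv2 he2 hgR1₂ hgR2₂
  exact fullsplit (S1 := R1.vertexSet) (S2 := R2.vertexSet) hdisj Q.isPath hQfull heq
    (fun x hx => hset1v hx) hgR1 (fun x hx => hset2v hx) hgR2
    (fun x hx => hv1 hx) hgR1₂ (fun x hx => hv2 hx) hgR2₂
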